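/- If A and B are bounded operators on a complex Hilbert space with AB = λBA, AB ≠ 0, and σ(AB) ≠ {0}, then |λ| = 1. -/

import Mathlib

variable {H : Type*} [NormedAddCommGroup H] [InnerProductSpace ℂ H] [CompleteSpace H]

theorem stmt3 (A B : H →L[ℂ] H) (lam : ℂ)
    (h : A * B = lam • (B * A)) (hne : A * B ≠ 0)
    (hspec : spectrum ℂ (A * B) ≠ {0}) : ‖lam‖ = 1 := by
  classical
  rcases subsingleton_or_nontrivial H with hH | hH
  · exact absurd (Subsingleton.elim (A * B) 0) hne
  have hlam : lam ≠ 0 := by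
    rintro rfl
    simp at h
    exact hne h
  set u : ℂˣ := Units.mk0 lam hlam with hu
  -- forward and backward invariance of nonzero spectrum
  have key : ∀ μ : ℂ, μ ∈ spectrum ℂ (A * B) → μ ≠ 0 →
      lam * μ ∈ spectrum ℂ (A * B) ∧ lam⁻¹ * μ ∈ spectrum ℂ (A * B) := by
    intro μ hμ hμ0
    have hswap := spectrum.nonzero_mul_comm (𝕜 := ℂ) A B
    have hswap' : spectrum ℂ (B * A) \ {0} = spectrum ℂ (A * B) \ {0} := hswap.symm
    have hμBA : μ ∈ spectrum ℂ (B * A) := by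
      have : μ ∈ spectrum ℂ (A * B) \ {0} := ⟨hμ, hμ0⟩
      rw [hswap] at this
      exact this.1
    have husmul : u • (B * A) = A * B := by
      rw [h]; simp [hu, Units.smul_def]
    constructor
    · have : u • μ ∈ spectrum ℂ (u • (B * A)) :=
        (spectrum.smul_mem_smul_iff (R := ℂ)).mpr hμBA
      rw [husmul] at this
      simpa [hu, Units.smul_def] using this
    · have hmem : u • ((u⁻¹ : ℂˣ) • μ) ∈ spectrum ℂ (u • (B * A)) := by
        rw [smul_inv_smul, husmul]; exact hμ
      have hν : (u⁻¹ : ℂˣ) • μ ∈ spectrum ℂ (B * A) :=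
        (spectrum.smul_mem_smul_iff (R := ℂ)).mp hmem
      have hν0 : (u⁻¹ : ℂˣ) • μ ≠ 0 := by
        simp [hu, Units.smul_def, hμ0, hlam]
      have : (u⁻¹ : ℂˣ) • μ ∈ spectrum ℂ (A * B) \ {0} := by
        rw [← hswap']; exact ⟨hν, hν0⟩
      simpa [hu, Units.smul_def] using this.1
  -- get a nonzero spectral value
  obtain ⟨μ, hμ, hμ0⟩ : ∃ μ ∈ spectrum ℂ (A * B), μ ≠ 0 := by
    by_contra hc
    push_neg at hc
    apply hspec
    apply Set.eq_singleton_iff_nonempty_unique_mem.mpr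
    exact ⟨spectrum.nonempty (A * B), hc⟩
  have hpow : ∀ n : ℕ, lam ^ n * μ ∈ spectrum ℂ (A * B) ∧
      (lam⁻¹) ^ n * μ ∈ spectrum ℂ (A * B) := by
    intro n
    induction n with
    | zero => constructor <;> simpa using hμ
    | succ n ih =>
      have h1 := (key _ ih.1 (mul_ne_zero (pow_ne_zero _ hlam) hμ0)).1
      have h2 := (key _ ih.2 (mul_ne_zero (pow_ne_zero _ (inv_ne_zero hlam)) hμ0)).2
      constructor
      · convert h1 using 1; ring
      · convert h2 using 1; ring
  have hbound : ∀ ν ∈ spectrum ℂ (A * B), ‖ν‖ ≤ ‖A * B‖ := fun ν hν =>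
    spectrum.norm_le_norm_of_mem hν
  have hle : ∀ (c : ℂ), c ≠ 0 → (∀ n : ℕ, c ^ n * μ ∈ spectrum ℂ (A * B)) →
      ‖c‖ ≤ 1 := by
    intro c hc hcmem
    by_contra hgt
    push_neg at hgt
    obtain ⟨n, hn⟩ := pow_unbounded_of_one_lt (‖A * B‖ / ‖μ‖) hgt
    have := hbound _ (hcmem n)
    rw [norm_mul, norm_pow] at this
    have hμpos : (0:ℝ) < ‖μ‖ := norm_pos_iff.mpr hμ0
    have h' : ‖A * B‖ < ‖c‖ ^ n * ‖μ‖ := (div_lt_iff₀ hμpos).mp hn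
    linarith
  have h1 := hle lam hlam (fun n => (hpow n).1)
  have h2 := hle lam⁻¹ (inv_ne_zero hlam) (fun n => (hpow n).2)
  rw [norm_inv] at h2
  have := inv_le_one_iff₀.mp h2
  rcases this with h3 | h3
  · exact absurd (norm_eq_zero.mp (le_antisymm (by simpa using h3) (by positivity)))
      hlam
  · exact le_antisymm h1 h3
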